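/- arXiv:2011.13103 — 2 statements merged into one kernel-verified Lean document; each statement's English description precedes it below -/
import Mathlib

section
/- The semi-tensor product is associative: for any real matrices A, B, C, (A⋉B)⋉C = A⋉(B⋉C). -/
open Matrix Kronecker

noncomputable section

/-- Row-major pairing `(i, j) ↦ N * i + j`, matching the standard Kronecker convention. -/
def kronEquiv (M N : ℕ) : Fin M × Fin N ≃ Fin (M * N) := finProdFinEquiv

/-- Kronecker product of two (column) vectors. -/
def vecKron {M N : ℕ} (u : Fin M → ℝ) (x : Fin N → ℝ) : Fin (M * N) → ℝ :=
  fun k => u ((kronEquiv M N).symm k).1 * x ((kronEquiv M N).symm k).2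

/-- `δ_N^i` (0-indexed): the `i`-th column of the identity matrix `I_N`. -/
def eVec (N : ℕ) (i : Fin N) : Fin N → ℝ := fun j => if j = i then 1 else 0

/-- The set `Δ_N` of columns of the identity matrix. -/
def deltaSet (N : ℕ) : Set (Fin N → ℝ) := {x | ∃ i, x = eVec N i}

/-- A matrix is logical if every column is a standard basis vector. -/
def IsLogical {m n : ℕ} (L : Matrix (Fin m) (Fin n) ℝ) : Prop :=
  ∀ j, ∃ i, (fun k => L k j) = eVec m i

/-- The power-reducing matrix `PR_k = diag(δ_k^1, …, δ_k^k)`: column `j` is `δ_k^j ⊗ δ_k^j`. -/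
def PRmat (k : ℕ) : Matrix (Fin (k * k)) (Fin k) ℝ :=
  Matrix.of fun i j => vecKron (eVec k j) (eVec k j) i

lemma stp_dim (n p : ℕ) : p * (Nat.lcm n p / p) = n * (Nat.lcm n p / n) := by
  rw [Nat.mul_div_cancel' (Nat.dvd_lcm_right n p), Nat.mul_div_cancel' (Nat.dvd_lcm_left n p)]

/-- The semi-tensor product `A ⋉ B = (A ⊗ I_{t/n})(B ⊗ I_{t/p})`, `t = lcm(n,p)`. -/
def stp {m n p q : ℕ} (A : Matrix (Fin m) (Fin n) ℝ) (B : Matrix (Fin p) (Fin q) ℝ) :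
    Matrix (Fin (m * (Nat.lcm n p / n))) (Fin (q * (Nat.lcm n p / p))) ℝ :=
  (Matrix.reindex (kronEquiv m _) (kronEquiv n _)
      (A ⊗ₖ (1 : Matrix (Fin (Nat.lcm n p / n)) (Fin (Nat.lcm n p / n)) ℝ))) *
  (Matrix.reindex ((kronEquiv p _).trans (finCongr (stp_dim n p))) (kronEquiv q _)
      (B ⊗ₖ (1 : Matrix (Fin (Nat.lcm n p / p)) (Fin (Nat.lcm n p / p)) ℝ)))


def F {m n : ℕ} (A : Matrix (Fin m) (Fin n) ℝ) (t : ℕ) :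
    Matrix (Fin (m * t)) (Fin (n * t)) ℝ :=
  Matrix.reindex (kronEquiv m t) (kronEquiv n t) (A ⊗ₖ (1 : Matrix (Fin t) (Fin t) ℝ))

lemma F_mul {m n p : ℕ} (A : Matrix (Fin m) (Fin n) ℝ) (B : Matrix (Fin n) (Fin p) ℝ) (t : ℕ) :
    F (A * B) t = F A t * F B t := by
  unfold F
  rw [show (1 : Matrix (Fin t) (Fin t) ℝ) = 1 * 1 by rw [one_mul],
    Matrix.mul_kronecker_mul]
  simp [Matrix.reindex_apply, Matrix.submatrix_mul_equiv]

-- F of a finCongr-reindexed matrix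
lemma F_congr {a b a' b' : ℕ} (h : a = a') (h' : b = b') (M : Matrix (Fin a) (Fin b) ℝ) (t : ℕ) :
    F (Matrix.reindex (finCongr h) (finCongr h') M) t =
      Matrix.reindex (finCongr (by rw [h])) (finCongr (by rw [h'])) (F M t) := by
  subst h h'
  simp [finCongr_refl]

lemma F_apply {m n : ℕ} (A : Matrix (Fin m) (Fin n) ℝ) (t : ℕ) (i : Fin m) (j : Fin n)
    (a b : Fin t) :
    F A t (kronEquiv m t (i, a)) (kronEquiv n t (j, b)) = A i j * if a = b then 1 else 0 := by
  simp [F, Matrix.reindex_apply, Matrix.one_apply]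

lemma kron_assoc_index {m t u : ℕ} (h : m * t * u = m * (t * u)) (i : Fin m) (a : Fin t)
    (c : Fin u) :
    (finCongr h) (kronEquiv (m * t) u (kronEquiv m t (i, a), c)) =
      kronEquiv m (t * u) (i, kronEquiv t u (a, c)) := by
  apply Fin.ext
  simp [kronEquiv, finProdFinEquiv]
  ring

lemma F_F {m n : ℕ} (A : Matrix (Fin m) (Fin n) ℝ) (t u : ℕ) :
    F (F A t) u = Matrix.reindex (finCongr (mul_assoc m t u).symm)
      (finCongr (mul_assoc n t u).symm) (F A (t * u)) := by
  ext I J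
  obtain ⟨⟨I', c⟩, rfl⟩ := (kronEquiv (m * t) u).surjective I
  obtain ⟨⟨i, a⟩, rfl⟩ := (kronEquiv m t).surjective I'
  obtain ⟨⟨J', d⟩, rfl⟩ := (kronEquiv (n * t) u).surjective J
  obtain ⟨⟨j, b⟩, rfl⟩ := (kronEquiv n t).surjective J'
  rw [F_apply, F_apply, Matrix.reindex_apply, Matrix.submatrix_apply]
  rw [show (finCongr (mul_assoc m t u).symm).symm = finCongr (mul_assoc m t u) from rfl,
    show (finCongr (mul_assoc n t u).symm).symm = finCongr (mul_assoc n t u) from rfl,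
    kron_assoc_index, kron_assoc_index, F_apply]
  have hinj := (kronEquiv t u).injective
  by_cases hab : a = b <;> by_cases hcd : c = d <;>
    simp [hab, hcd, Prod.ext_iff, mul_assoc, (kronEquiv t u).apply_eq_iff_eq, Prod.ext_iff]

-- Abbreviations used throughout (as local defs in proofs)
lemma master (n p q r : ℕ) :
    p * Nat.lcm (q * (Nat.lcm n p / p)) r = q * Nat.lcm n (p * (Nat.lcm q r / q)) := by
  have h1 : p * (q * (Nat.lcm n p / p)) = q * Nat.lcm n p := by
    rw [show p * (q * (Nat.lcm n p / p)) = q * (p * (Nat.lcm n p / p)) by ring,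
      Nat.mul_div_cancel' (Nat.dvd_lcm_right n p)]
  have h2 : q * (p * (Nat.lcm q r / q)) = p * Nat.lcm q r := by
    rw [show q * (p * (Nat.lcm q r / q)) = p * (q * (Nat.lcm q r / q)) by ring,
      Nat.mul_div_cancel' (Nat.dvd_lcm_left q r)]
  rw [← Nat.lcm_mul_left, ← Nat.lcm_mul_left, h1, h2, ← Nat.lcm_mul_left, ← Nat.lcm_mul_left]
  rw [Nat.lcm_assoc, mul_comm q p]

section natids
variable (n p q r : ℕ)

-- all with t1 = lcm n p, β = t1/p, t2 = lcm (q*β) r, etc.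

lemma key1 (hq : q ≠ 0) :
    p * (Nat.lcm n p / p * (Nat.lcm (q * (Nat.lcm n p / p)) r / (q * (Nat.lcm n p / p)))) =
      Nat.lcm n (p * (Nat.lcm q r / q)) := by
  apply Nat.eq_of_mul_eq_mul_left (Nat.pos_of_ne_zero hq)
  have h2 : q * (Nat.lcm n p / p) * (Nat.lcm (q * (Nat.lcm n p / p)) r / (q * (Nat.lcm n p / p)))
      = Nat.lcm (q * (Nat.lcm n p / p)) r :=
    Nat.mul_div_cancel' (Nat.dvd_lcm_left _ _)
  calc q * (p * (Nat.lcm n p / p * (Nat.lcm (q * (Nat.lcm n p / p)) r / (q * (Nat.lcm n p / p)))))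
      = p * (q * (Nat.lcm n p / p) * (Nat.lcm (q * (Nat.lcm n p / p)) r / (q * (Nat.lcm n p / p)))) := by ring
    _ = p * Nat.lcm (q * (Nat.lcm n p / p)) r := by rw [h2]
    _ = q * Nat.lcm n (p * (Nat.lcm q r / q)) := master n p q r

lemma h_alpha :
    Nat.lcm n p / n * (Nat.lcm (q * (Nat.lcm n p / p)) r / (q * (Nat.lcm n p / p))) =
      Nat.lcm n (p * (Nat.lcm q r / q)) / n := by
  rcases eq_or_ne q 0 with rfl | hq
  · simp
  rcases eq_or_ne n 0 with rfl | hn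
  · simp
  apply Nat.eq_of_mul_eq_mul_left (Nat.pos_of_ne_zero hn)
  rw [Nat.mul_div_cancel' (Nat.dvd_lcm_left n _), ← mul_assoc,
    Nat.mul_div_cancel' (Nat.dvd_lcm_left n p)]
  have := key1 n p q r hq
  rw [← this, ← mul_assoc, Nat.mul_div_cancel' (Nat.dvd_lcm_right n p)]

lemma h_beta :
    Nat.lcm n p / p * (Nat.lcm (q * (Nat.lcm n p / p)) r / (q * (Nat.lcm n p / p))) =
      Nat.lcm q r / q * (Nat.lcm n (p * (Nat.lcm q r / q)) / (p * (Nat.lcm q r / q))) := by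
  rcases eq_or_ne q 0 with rfl | hq
  · simp
  rcases eq_or_ne p 0 with rfl | hp
  · simp
  apply Nat.eq_of_mul_eq_mul_left (Nat.pos_of_ne_zero hp)
  rw [key1 n p q r hq, ← mul_assoc, Nat.mul_div_cancel' (Nat.dvd_lcm_right n _)]

lemma h_delta :
    Nat.lcm (q * (Nat.lcm n p / p)) r / r =
      Nat.lcm q r / r * (Nat.lcm n (p * (Nat.lcm q r / q)) / (p * (Nat.lcm q r / q))) := by
  rcases eq_or_ne r 0 with rfl | hr
  · simp
  rcases eq_or_ne q 0 with rfl | hq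
  · simp
  rcases eq_or_ne p 0 with rfl | hp
  · simp
  apply Nat.eq_of_mul_eq_mul_left (Nat.pos_of_ne_zero hr)
  rw [Nat.mul_div_cancel' (Nat.dvd_lcm_right _ r), ← mul_assoc,
    Nat.mul_div_cancel' (Nat.dvd_lcm_right q r)]
  -- goal : lcm (q*β) r = lcm q r * δ'  -- i.e. t2 = t3 * δ'
  apply Nat.eq_of_mul_eq_mul_left (Nat.pos_of_ne_zero hp)
  calc p * Nat.lcm (q * (Nat.lcm n p / p)) r
      = q * Nat.lcm n (p * (Nat.lcm q r / q)) := master n p q r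
    _ = q * ((p * (Nat.lcm q r / q)) * (Nat.lcm n (p * (Nat.lcm q r / q)) / (p * (Nat.lcm q r / q)))) := by
        rw [Nat.mul_div_cancel' (Nat.dvd_lcm_right n _)]
    _ = p * (q * (Nat.lcm q r / q) * (Nat.lcm n (p * (Nat.lcm q r / q)) / (p * (Nat.lcm q r / q)))) := by ring
    _ = p * (Nat.lcm q r * (Nat.lcm n (p * (Nat.lcm q r / q)) / (p * (Nat.lcm q r / q)))) := by
        rw [Nat.mul_div_cancel' (Nat.dvd_lcm_left q r)]

end natids

lemma reindex_mul {a b c a' b' c' : ℕ} (e : Fin a ≃ Fin a') (f : Fin c ≃ Fin c')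
    (g : Fin b ≃ Fin b') (M : Matrix (Fin a) (Fin b) ℝ) (N : Matrix (Fin b) (Fin c) ℝ) :
    Matrix.reindex e f (M * N) = Matrix.reindex e g M * Matrix.reindex g f N := by
  simp [Matrix.reindex_apply, Matrix.submatrix_mul_equiv]


lemma stp_eq {m n p q : ℕ} (A : Matrix (Fin m) (Fin n) ℝ) (B : Matrix (Fin p) (Fin q) ℝ) :
    stp A B = F A (Nat.lcm n p / n) *
      Matrix.reindex (finCongr (stp_dim n p)) (Equiv.refl _) (F B (Nat.lcm n p / p)) := rfl

lemma F_congr_left {a a' b : ℕ} (h : a = a') (M : Matrix (Fin a) (Fin b) ℝ) (t : ℕ) :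
    F (Matrix.reindex (finCongr h) (Equiv.refl (Fin b)) M) t =
      Matrix.reindex (finCongr (by rw [h])) (Equiv.refl _) (F M t) := by
  subst h
  simp [finCongr_refl]

def G {m n p q r s : ℕ} (A : Matrix (Fin m) (Fin n) ℝ) (B : Matrix (Fin p) (Fin q) ℝ)
    (C : Matrix (Fin r) (Fin s) ℝ) (X Y Z : ℕ) (h1 : p * Y = n * X) (h2 : r * Z = q * Y) :
    Matrix (Fin (m * X)) (Fin (s * Z)) ℝ :=
  F A X * Matrix.reindex (finCongr h1) (Equiv.refl _) (F B Y) *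
    Matrix.reindex (finCongr h2) (Equiv.refl _) (F C Z)

lemma G_heq {m n p q r s : ℕ} (A : Matrix (Fin m) (Fin n) ℝ) (B : Matrix (Fin p) (Fin q) ℝ)
    (C : Matrix (Fin r) (Fin s) ℝ) {X Y Z X' Y' Z' : ℕ} (hX : X = X') (hY : Y = Y')
    (hZ : Z = Z') (h1 : p * Y = n * X) (h2 : r * Z = q * Y) (h1' : p * Y' = n * X')
    (h2' : r * Z' = q * Y') : HEq (G A B C X Y Z h1 h2) (G A B C X' Y' Z' h1' h2') := by
  subst hX hY hZ
  rfl

lemma matrix_heq {a b a' b' : ℕ} (ha : a = a') (hb : b = b') {M : Matrix (Fin a) (Fin b) ℝ}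
    {N : Matrix (Fin a') (Fin b') ℝ}
    (h : M = Matrix.reindex (finCongr ha.symm) (finCongr hb.symm) N) : HEq M N := by
  subst ha hb
  rw [h, finCongr_refl, finCongr_refl]
  simp

section steps
variable {m n p q r s : ℕ} (A : Matrix (Fin m) (Fin n) ℝ) (B : Matrix (Fin p) (Fin q) ℝ)
  (C : Matrix (Fin r) (Fin s) ℝ)

lemma hA (n p q r : ℕ) :
    p * (Nat.lcm n p / p * (Nat.lcm (q * (Nat.lcm n p / p)) r / (q * (Nat.lcm n p / p)))) =
      n * (Nat.lcm n p / n * (Nat.lcm (q * (Nat.lcm n p / p)) r / (q * (Nat.lcm n p / p)))) := by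
  rw [← mul_assoc, stp_dim n p, mul_assoc]

lemma hB (n p q r : ℕ) :
    r * (Nat.lcm (q * (Nat.lcm n p / p)) r / r) =
      q * (Nat.lcm n p / p * (Nat.lcm (q * (Nat.lcm n p / p)) r / (q * (Nat.lcm n p / p)))) := by
  rw [stp_dim (q * (Nat.lcm n p / p)) r, mul_assoc]

lemma hA' (n p q r : ℕ) :
    p * (Nat.lcm q r / q * (Nat.lcm n (p * (Nat.lcm q r / q)) / (p * (Nat.lcm q r / q)))) =
      n * (Nat.lcm n (p * (Nat.lcm q r / q)) / n) := by
  rw [← mul_assoc]; exact stp_dim n (p * (Nat.lcm q r / q))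

lemma hB' (n p q r : ℕ) :
    r * (Nat.lcm q r / r * (Nat.lcm n (p * (Nat.lcm q r / q)) / (p * (Nat.lcm q r / q)))) =
      q * (Nat.lcm q r / q * (Nat.lcm n (p * (Nat.lcm q r / q)) / (p * (Nat.lcm q r / q)))) := by
  rw [← mul_assoc, ← mul_assoc, Nat.mul_div_cancel' (Nat.dvd_lcm_right q r),
    Nat.mul_div_cancel' (Nat.dvd_lcm_left q r)]

lemma step1 : HEq (stp (stp A B) C)
    (G A B C _ _ _ (hA n p q r) (hB n p q r)) := by
  apply matrix_heq (mul_assoc m (Nat.lcm n p / n) _) rfl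
  rw [stp_eq (stp A B) C, stp_eq A B, F_mul, F_F, F_congr_left, F_F]
  unfold G
  rw [reindex_mul _ _ (finCongr (mul_assoc q (Nat.lcm n p / p)
    (Nat.lcm (q * (Nat.lcm n p / p)) r / (q * (Nat.lcm n p / p)))).symm)]
  rw [reindex_mul _ _ (finCongr (mul_assoc n (Nat.lcm n p / n)
    (Nat.lcm (q * (Nat.lcm n p / p)) r / (q * (Nat.lcm n p / p)))).symm)]
  rfl

lemma step2 : HEq (stp A (stp B C))
    (G A B C _ _ _ (hA' n p q r) (hB' n p q r)) := by
  apply matrix_heq rfl (mul_assoc s (Nat.lcm q r / r) _)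
  rw [stp_eq A (stp B C), stp_eq B C, F_mul, F_F, F_congr_left, F_F]
  rw [reindex_mul _ _ (finCongr (mul_assoc q (Nat.lcm q r / q)
    (Nat.lcm n (p * (Nat.lcm q r / q)) / (p * (Nat.lcm q r / q)))))]
  rw [← Matrix.mul_assoc]
  unfold G
  rw [reindex_mul _ _ (Equiv.refl (Fin (q * (Nat.lcm q r / q *
    (Nat.lcm n (p * (Nat.lcm q r / q)) / (p * (Nat.lcm q r / q)))))))]
  rw [reindex_mul _ _ (Equiv.refl (Fin (n * (Nat.lcm n (p * (Nat.lcm q r / q)) / n))))]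
  rfl

end steps

/-- the semi-tensor product is associative. -/
theorem stp_assoc {m n p q r s : ℕ} (A : Matrix (Fin m) (Fin n) ℝ)
    (B : Matrix (Fin p) (Fin q) ℝ) (C : Matrix (Fin r) (Fin s) ℝ) :
    HEq (stp (stp A B) C) (stp A (stp B C)) :=
  (step1 A B C).trans <|
    (G_heq A B C (h_alpha n p q r) (h_beta n p q r) (h_delta n p q r)
      (hA n p q r) (hB n p q r) (hA' n p q r) (hB' n p q r)).trans (step2 A B C).symm
end
end

section
/- For every Boolean function F : {0,1}^n → {0,1} there exists a unique logical matrix M_F ∈ L_{2×2^n} such that, for all x_1,...,x_n ∈ Δ_2, the vector form of F satisfies f(x_1,...,x_n) = M_F ⋉ x_1 ⋉ ⋯ ⋉ x_n, where the vector form of X ∈ {0,1} is (X, 1−X)^T ∈ Δ_2. -/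
open Matrix Kronecker

noncomputable section

/-- Vector form of a Boolean value: `vec(1) = δ_2^1`, `vec(0) = δ_2^2`. -/
def vecB (b : Bool) : Fin 2 → ℝ := eVec 2 (if b then 0 else 1)

/-- Iterated Kronecker product `x_1 ⊗ x_2 ⊗ ⋯ ⊗ x_n` of vectors in `Δ_2`
(which coincides with the iterated semi-tensor product). -/
def iterKron : (n : ℕ) → (Fin n → Fin 2 → ℝ) → Fin (2 ^ n) → ℝ
  | 0, _ => fun _ => 1
  | n + 1, x => fun k =>
      vecKron (x 0) (iterKron n fun i => x i.succ)
        (finCongr (by rw [pow_succ'] : 2 ^ (n + 1) = 2 * 2 ^ n) k)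

lemma vecKron_eVec {M N : ℕ} (a : Fin M) (b : Fin N) :
    vecKron (eVec M a) (eVec N b) = eVec (M * N) (kronEquiv M N (a, b)) := by
  funext k
  rcases (kronEquiv M N).surjective k with ⟨⟨i, j⟩, rfl⟩
  simp only [vecKron, eVec, Equiv.symm_apply_apply, Equiv.apply_eq_iff_eq, Prod.ext_iff,
    mul_ite, mul_one, mul_zero, ite_and]
  split_ifs <;> rfl

/-- Index of the basis vector obtained by Kronecker-multiplying basis vectors. -/
def idxF : (n : ℕ) → (Fin n → Fin 2) → Fin (2 ^ n)
  | 0, _ => 0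
  | n + 1, a => (finCongr (by rw [pow_succ'] : 2 ^ (n + 1) = 2 * 2 ^ n)).symm
      (kronEquiv 2 (2 ^ n) (a 0, idxF n fun i => a i.succ))

lemma iterKron_eVec : ∀ (n : ℕ) (a : Fin n → Fin 2),
    iterKron n (fun i => eVec 2 (a i)) = eVec (2 ^ n) (idxF n a)
  | 0, a => by
    funext k
    have h1 : k = idxF 0 a := by
      have hk := k.isLt
      have hi := (idxF 0 a).isLt
      apply Fin.ext
      simp only [pow_zero] at hk hi
      omega
    simp [iterKron, eVec, h1]
  | n + 1, a => by
    funext k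
    show vecKron (eVec 2 (a 0)) (iterKron n fun i => eVec 2 (a i.succ)) _ = _
    rw [iterKron_eVec n, vecKron_eVec]
    simp [eVec, idxF, Fin.ext_iff]

lemma idxF_injective : ∀ n, Function.Injective (idxF n)
  | 0 => fun a b _ => funext fun i => i.elim0
  | n + 1 => by
    intro a b h
    simp only [idxF, EmbeddingLike.apply_eq_iff_eq, Prod.mk.injEq] at h
    obtain ⟨h0, h1⟩ := h
    have h2 := idxF_injective n h1
    funext i
    refine Fin.cases h0 (fun j => congrFun h2 j) i

lemma idxF_bijective (n : ℕ) : Function.Bijective (idxF n) := by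
  rw [Fintype.bijective_iff_injective_and_card]
  exact ⟨idxF_injective n, by simp⟩

/-- Boolean to index, matching `vecB`. -/
def b2f (b : Bool) : Fin 2 := if b then 0 else 1

lemma vecB_eq (b : Bool) : vecB b = eVec 2 (b2f b) := rfl

lemma b2f_bijective : Function.Bijective b2f := by
  constructor
  · intro a b; cases a <;> cases b <;> simp [b2f]
  · intro k; fin_cases k
    · exact ⟨true, rfl⟩
    · exact ⟨false, rfl⟩

lemma mulVec_eVec {m N : ℕ} (M : Matrix (Fin m) (Fin N) ℝ) (k : Fin N) :
    M.mulVec (eVec N k) = fun i => M i k := by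
  funext i
  simp [Matrix.mulVec, dotProduct, eVec, mul_ite]

/-- every Boolean function has a unique structure matrix
`M_F ∈ L_{2×2^n}` with `f(x_1,…,x_n) = M_F ⋉ x_1 ⋉ ⋯ ⋉ x_n`. -/
theorem structure_matrix_exists_unique (n : ℕ) (F : (Fin n → Bool) → Bool) :
    ∃! MF : Matrix (Fin 2) (Fin (2 ^ n)) ℝ, IsLogical MF ∧
      ∀ X : Fin n → Bool, vecB (F X) = MF.mulVec (iterKron n fun i => vecB (X i)) := by
  have hbij : Function.Bijective (fun X : Fin n → Bool => idxF n fun i => b2f (X i)) := by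
    refine (idxF_bijective n).comp ?_
    constructor
    · intro a b h
      funext i
      exact b2f_bijective.1 (congrFun h i)
    · intro a
      refine ⟨fun i => (b2f_bijective.2 (a i)).choose, funext fun i =>
        (b2f_bijective.2 (a i)).choose_spec⟩
  let E : (Fin n → Bool) ≃ Fin (2 ^ n) := Equiv.ofBijective _ hbij
  have hIter : ∀ X : Fin n → Bool,
      (iterKron n fun i => vecB (X i)) = eVec (2 ^ n) (E X) := by
    intro X
    simpa [vecB_eq, E] using iterKron_eVec n fun i => b2f (X i)
  refine ⟨Matrix.of fun i k => vecB (F (E.symm k)) i, ⟨?_, ?_⟩, ?_⟩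
  · intro k
    exact ⟨if F (E.symm k) then 0 else 1, rfl⟩
  · intro X
    rw [hIter, mulVec_eVec]
    funext i
    simp [E]
  · rintro M' ⟨-, hM'⟩
    ext i k
    have := congrFun (hM' (E.symm k)) i
    rw [hIter, mulVec_eVec, Equiv.apply_symm_apply] at this
    exact this.symm
end
end
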